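/- For positive integers n, ℓ and nonnegative integer k: ∑ over a, b₁, …, b_k each ranging over 1..n with gcd(a,n)=1 of gcd(a^ℓ - 1, b₁, …, b_k, n) equals φ(n) · (id_k ∗ C^{(ℓ)})(n), where id_k(n)=n^k, ∗ is Dirichlet convolution, and C^{(ℓ)}(n) is the number of x mod n with x^ℓ ≡ 1 (mod n). -/

import Mathlib

open Finset

lemma lkq_gcd_eq_sum_totient (m n : ℕ) (hn : n ≠ 0) :
    Nat.gcd m n = ∑ d ∈ n.divisors.filter (· ∣ m), Nat.totient d := by
  have h : n.divisors.filter (· ∣ m) = (Nat.gcd m n).divisors := by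
    ext d
    simp only [Finset.mem_filter, Nat.mem_divisors, Nat.dvd_gcd_iff]
    constructor
    · rintro ⟨⟨h1, -⟩, h2⟩
      exact ⟨⟨h2, h1⟩, fun h => hn (Nat.eq_zero_of_gcd_eq_zero_right h)⟩
    · rintro ⟨⟨h2, h1⟩, -⟩
      exact ⟨⟨h1, hn⟩, h2⟩
  rw [h, Nat.sum_totient]

lemma lkq_count_dvd_Icc (n d : ℕ) : ((Finset.Icc 1 n).filter (d ∣ ·)).card = n / d := by
  have : Finset.Icc 1 n = Finset.Ioc 0 n := by rw [← Finset.Icc_add_one_left_eq_Ioc, zero_add]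
  rw [this]
  exact Nat.Ioc_filter_dvd_card_eq_div n d

lemma lkq_pow_mod_of_dvd {n d : ℕ} (hd : d ∣ n) (a ℓ : ℕ) :
    (a % n) ^ ℓ % d = a ^ ℓ % d := by
  exact ((Nat.mod_modEq a n).of_dvd hd).pow ℓ

lemma lkq_card_Icc_filter_mod (n : ℕ) (hn : 0 < n) (p : ℕ → Prop) [DecidablePred p]
    (hp : ∀ a, p (a % n) ↔ p a) :
    ((Finset.Icc 1 n).filter p).card = ((Finset.range n).filter p).card := by
  refine Finset.card_bij (fun a _ => a % n) ?_ ?_ ?_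
  · intro a ha
    rw [Finset.mem_filter] at ha ⊢
    exact ⟨Finset.mem_range.mpr (Nat.mod_lt _ hn), (hp a).mpr ha.2⟩
  · intro a ha b hb h
    rw [Finset.mem_filter, Finset.mem_Icc] at ha hb
    have key : ∀ x : ℕ, 1 ≤ x → x ≤ n → x % n = if x = n then 0 else x := by
      intro x h1 h2
      rcases eq_or_lt_of_le h2 with rfl | hlt
      · simp
      · rw [Nat.mod_eq_of_lt hlt, if_neg hlt.ne]
    rw [key a ha.1.1 ha.1.2, key b hb.1.1 hb.1.2] at h
    split_ifs at h with h1 h2 h2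
    · rw [h1, h2]
    · exact absurd h.symm (by omega)
    · exact absurd h (by omega)
    · exact h
  · intro x hx
    rw [Finset.mem_filter, Finset.mem_range] at hx
    refine ⟨if x = 0 then n else x, ?_, ?_⟩
    · rw [Finset.mem_filter, Finset.mem_Icc]
      split_ifs with h0
      · refine ⟨⟨hn, le_refl n⟩, ?_⟩
        rw [← hp n, Nat.mod_self, ← h0]; exact hx.2
      · refine ⟨⟨by omega, hx.1.le⟩, hx.2⟩
    · split_ifs with h0
      · rw [Nat.mod_self, h0]
      · exact Nat.mod_eq_of_lt hx.1

lemma lkq_fiber_card {G H : Type*} [Group G] [Group H] [Fintype G] [DecidableEq H]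
    (f : G →* H) (hf : Function.Surjective f) (v : H) :
    (Finset.univ.filter fun u => f u = v).card
      = (Finset.univ.filter fun u => f u = 1).card := by
  obtain ⟨u₀, hu₀⟩ := hf v
  refine Finset.card_bij (fun u _ => u * u₀⁻¹) ?_ ?_ ?_
  · intro u hu
    rw [Finset.mem_filter] at hu ⊢
    simp [map_mul, map_inv, hu.2, hu₀]
  · intro a _ b _ h
    simpa using mul_right_cancel h
  · intro w hw
    rw [Finset.mem_filter] at hw
    refine ⟨w * u₀, ?_, by simp⟩
    rw [Finset.mem_filter]
    simp [map_mul, hw.2, hu₀]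

lemma lkq_key_count {G H : Type*} [Group G] [Group H] [Fintype G] [Fintype H] [DecidableEq H]
    (f : G →* H) (hf : Function.Surjective f) (S : Finset H) :
    (Finset.univ.filter fun u => f u ∈ S).card * Fintype.card H
      = Fintype.card G * S.card := by
  set K := (Finset.univ.filter fun u : G => f u = 1).card with hK
  have h1 : (Finset.univ.filter fun u => f u ∈ S).card = S.card * K := by
    rw [Finset.card_eq_sum_card_fiberwise (f := f) (s := Finset.univ.filter fun u => f u ∈ S) (t := S)
      (fun x hx => (Finset.mem_filter.mp hx).2)]
    rw [Finset.sum_congr rfl fun v hv => ?_, Finset.sum_const, smul_eq_mul]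
    rw [Finset.filter_filter]
    rw [show (Finset.univ.filter fun u : G => f u ∈ S ∧ f u = v)
        = Finset.univ.filter fun u : G => f u = v from by
      ext u
      simp only [Finset.mem_filter, Finset.mem_univ, true_and]
      exact ⟨fun h => h.2, fun h => ⟨h ▸ hv, h⟩⟩]
    exact lkq_fiber_card f hf v
  have h2 : Fintype.card G = Fintype.card H * K := by
    have h := Finset.card_eq_sum_card_fiberwise (f := f) (s := (Finset.univ : Finset G))
      (t := (Finset.univ : Finset H)) (fun x _ => Finset.mem_univ _)
    calc Fintype.card G = (Finset.univ : Finset G).card := rfl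
      _ = ∑ v ∈ (Finset.univ : Finset H), (Finset.univ.filter fun u : G => f u = v).card := h
      _ = ∑ _v ∈ (Finset.univ : Finset H), K :=
          Finset.sum_congr rfl fun v _ => lkq_fiber_card f hf v
      _ = Fintype.card H * K := by rw [Finset.sum_const, smul_eq_mul]; rfl
  rw [h1, h2]
  ring

lemma lkq_pow_cond_iff (d ℓ : ℕ) [NeZero d] (a : ℕ) :
    ((a : ZMod d) ^ ℓ = 1) ↔ a ^ ℓ % d = 1 % d := by
  rw [← Nat.cast_pow, show (1 : ZMod d) = ((1 : ℕ) : ZMod d) from by norm_cast,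
    ZMod.natCast_eq_natCast_iff]
  rfl

lemma lkq_claim2 (d ℓ : ℕ) [NeZero d] (hℓ : 0 < ℓ) :
    ((Finset.range d).filter fun x => x ^ ℓ % d = 1 % d).card
      = (Finset.univ.filter fun v : (ZMod d)ˣ => v ^ ℓ = 1).card := by
  have cop : ∀ x : ℕ, x ^ ℓ % d = 1 % d → Nat.Coprime x d := by
    intro x hx
    rw [← ZMod.isUnit_iff_coprime]
    refine IsUnit.of_mul_eq_one ((x : ZMod d) ^ (ℓ - 1)) ?_
    rw [← pow_succ', show ℓ - 1 + 1 = ℓ from by omega]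
    exact (lkq_pow_cond_iff d ℓ x).mpr hx
  refine Finset.card_bij
    (fun x hx => ZMod.unitOfCoprime x (cop x (Finset.mem_filter.mp hx).2)) ?_ ?_ ?_
  · intro x hx
    rw [Finset.mem_filter]
    refine ⟨Finset.mem_univ _, ?_⟩
    rw [Units.ext_iff, Units.val_pow_eq_pow_val, Units.val_one, ZMod.coe_unitOfCoprime]
    exact (lkq_pow_cond_iff d ℓ x).mpr (Finset.mem_filter.mp hx).2
  · intro a ha b hb h
    have h2 := congrArg (fun u : (ZMod d)ˣ => (u : ZMod d)) h
    simp only [ZMod.coe_unitOfCoprime] at h2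
    rw [ZMod.natCast_eq_natCast_iff] at h2
    rw [Finset.mem_filter, Finset.mem_range] at ha hb
    rwa [Nat.ModEq, Nat.mod_eq_of_lt ha.1, Nat.mod_eq_of_lt hb.1] at h2
  · intro v hv
    rw [Finset.mem_filter] at hv
    have hvv : (((v : ZMod d).val : ℕ) : ZMod d) = (v : ZMod d) := ZMod.natCast_rightInverse _
    have hcond : (v : ZMod d).val ^ ℓ % d = 1 % d := by
      rw [← lkq_pow_cond_iff d ℓ, hvv, ← Units.val_pow_eq_pow_val, hv.2, Units.val_one]
    refine ⟨(v : ZMod d).val, Finset.mem_filter.mpr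
      ⟨Finset.mem_range.mpr (ZMod.val_lt _), hcond⟩, ?_⟩
    ext
    rw [ZMod.coe_unitOfCoprime, hvv]

lemma lkq_claim1 (n d ℓ : ℕ) (hd : d ∣ n) [NeZero n] [NeZero d] :
    ((Finset.range n).filter fun a => Nat.gcd a n = 1 ∧ a ^ ℓ % d = 1 % d).card
      = (Finset.univ.filter fun u : (ZMod n)ˣ => (ZMod.unitsMap hd u) ^ ℓ = 1).card := by
  have hmap : ∀ (u : (ZMod n)ˣ), ((ZMod.unitsMap hd u : (ZMod d)ˣ) : ZMod d)
      = ZMod.cast ((u : ZMod n)) := by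
    intro u
    rw [ZMod.unitsMap_def]
    simp
  refine Finset.card_bij
    (fun a ha => ZMod.unitOfCoprime a (Finset.mem_filter.mp ha).2.1) ?_ ?_ ?_
  · intro a ha
    rw [Finset.mem_filter]
    refine ⟨Finset.mem_univ _, ?_⟩
    rw [Units.ext_iff, Units.val_pow_eq_pow_val, Units.val_one, hmap,
      ZMod.coe_unitOfCoprime, ZMod.cast_natCast hd]
    exact (lkq_pow_cond_iff d ℓ a).mpr (Finset.mem_filter.mp ha).2.2
  · intro a ha b hb h
    have h2 := congrArg (fun u : (ZMod n)ˣ => (u : ZMod n)) h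
    simp only [ZMod.coe_unitOfCoprime] at h2
    rw [ZMod.natCast_eq_natCast_iff] at h2
    rw [Finset.mem_filter, Finset.mem_range] at ha hb
    rwa [Nat.ModEq, Nat.mod_eq_of_lt ha.1, Nat.mod_eq_of_lt hb.1] at h2
  · intro u hu
    rw [Finset.mem_filter] at hu
    have hvv : (((u : ZMod n).val : ℕ) : ZMod n) = (u : ZMod n) := ZMod.natCast_rightInverse _
    have hcast : (((u : ZMod n).val : ℕ) : ZMod d) = ZMod.cast ((u : ZMod n)) := by
      conv_rhs => rw [← hvv]
      rw [ZMod.cast_natCast hd]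
    have hcond : (u : ZMod n).val ^ ℓ % d = 1 % d := by
      rw [← lkq_pow_cond_iff d ℓ, hcast, ← hmap, ← Units.val_pow_eq_pow_val, hu.2, Units.val_one]
    refine ⟨(u : ZMod n).val, Finset.mem_filter.mpr
      ⟨Finset.mem_range.mpr (ZMod.val_lt _), ZMod.val_coe_unit_coprime u, hcond⟩, ?_⟩
    ext
    rw [ZMod.coe_unitOfCoprime, hvv]

lemma lkq_aCount (n d ℓ : ℕ) (hd : d ∣ n) (hn : 0 < n) (hℓ : 0 < ℓ) :
    Nat.totient d * ((Finset.range n).filter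
        fun a => Nat.gcd a n = 1 ∧ a ^ ℓ % d = 1 % d).card
      = Nat.totient n * ((Finset.range d).filter fun x => x ^ ℓ % d = 1 % d).card := by
  haveI : NeZero n := ⟨hn.ne'⟩
  haveI : NeZero d := ⟨(Nat.pos_of_dvd_of_pos hd hn).ne'⟩
  rw [lkq_claim1 n d ℓ hd, lkq_claim2 d ℓ hℓ]
  have hkey := lkq_key_count (ZMod.unitsMap hd) (ZMod.unitsMap_surjective hd)
    (Finset.univ.filter fun v : (ZMod d)ˣ => v ^ ℓ = 1)
  have hS : (Finset.univ.filter fun u : (ZMod n)ˣ =>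
        ZMod.unitsMap hd u ∈ Finset.univ.filter fun v : (ZMod d)ˣ => v ^ ℓ = 1)
      = Finset.univ.filter fun u : (ZMod n)ˣ => (ZMod.unitsMap hd u) ^ ℓ = 1 := by
    ext u; simp
  rw [hS, ZMod.card_units_eq_totient, ZMod.card_units_eq_totient] at hkey
  rw [mul_comm (Nat.totient d)]
  exact hkey

lemma lkq_bCount (n d k : ℕ) :
    ((Fintype.piFinset fun _ : Fin k => Finset.Icc 1 n).filter
        fun b => ∀ i, d ∣ b i).card = (n / d) ^ k := by
  have h : (Fintype.piFinset fun _ : Fin k => Finset.Icc 1 n).filter (fun b => ∀ i, d ∣ b i)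
      = Fintype.piFinset fun _ : Fin k => (Finset.Icc 1 n).filter (d ∣ ·) := by
    ext b
    simp only [Finset.mem_filter, Fintype.mem_piFinset, ← forall_and]
  rw [h, Fintype.card_piFinset]
  rw [Finset.prod_congr rfl fun i _ => lkq_count_dvd_Icc n d]
  simp

theorem li_kim_qiao_identity (n ℓ k : ℕ) (hn : 0 < n) (hℓ : 0 < ℓ) :
    ∑ a ∈ (Finset.Icc 1 n).filter (fun a => Nat.gcd a n = 1),
      ∑ b ∈ Fintype.piFinset (fun _ : Fin k => Finset.Icc 1 n),
        Nat.gcd (a ^ ℓ - 1) (Nat.gcd (Finset.univ.gcd b) n)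
      = n.totient * ∑ d ∈ n.divisors,
          d ^ k *
            ((Finset.range (n / d)).filter (fun x => x ^ ℓ % (n / d) = 1 % (n / d))).card := by
  classical
  set C : ℕ → ℕ := fun m => ((Finset.range m).filter fun x => x ^ ℓ % m = 1 % m).card with hC
  set A := (Finset.Icc 1 n).filter (fun a => Nat.gcd a n = 1) with hA
  set B := Fintype.piFinset (fun _ : Fin k => Finset.Icc 1 n) with hB
  -- count of good a's, transferred
  have hAcount : ∀ d, d ∣ n →
      (A.filter fun a => d ∣ a ^ ℓ - 1).card
        = ((Finset.range n).filter fun a => Nat.gcd a n = 1 ∧ a ^ ℓ % d = 1 % d).card := by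
    intro d hdn
    rw [hA, Finset.filter_filter]
    have heq : (Finset.Icc 1 n).filter (fun a => Nat.gcd a n = 1 ∧ d ∣ a ^ ℓ - 1)
        = (Finset.Icc 1 n).filter (fun a => Nat.gcd a n = 1 ∧ a ^ ℓ % d = 1 % d) := by
      apply Finset.filter_congr
      intro a ha
      rw [Finset.mem_Icc] at ha
      have h1 : 1 ≤ a ^ ℓ := Nat.one_le_pow _ _ ha.1
      rw [and_congr_right_iff]
      intro _
      rw [← Nat.modEq_iff_dvd' h1]
      exact ⟨fun h => h.symm, fun h => h.symm⟩
    rw [heq]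
    exact lkq_card_Icc_filter_mod n hn _ (fun a => by
      rw [lkq_pow_mod_of_dvd hdn,
        show Nat.gcd (a % n) n = Nat.gcd a n from by rw [← Nat.gcd_rec, Nat.gcd_comm]])
  -- main per-divisor computation
  have step_d : ∀ d ∈ n.divisors,
      (∑ a ∈ A, ∑ b ∈ B, if d ∣ a ^ ℓ - 1 ∧ ∀ i, d ∣ b i then Nat.totient d else 0)
        = n.totient * ((n / d) ^ k * C d) := by
    intro d hd
    obtain ⟨hdn, -⟩ := Nat.mem_divisors.mp hd
    have hb : ∀ a : ℕ, (∑ b ∈ B, if d ∣ a ^ ℓ - 1 ∧ ∀ i, d ∣ b i then Nat.totient d else 0)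
        = if d ∣ a ^ ℓ - 1 then (n / d) ^ k * Nat.totient d else 0 := by
      intro a
      by_cases hP : d ∣ a ^ ℓ - 1
      · simp only [hP, true_and, if_true]
        rw [← Finset.sum_filter, Finset.sum_const, smul_eq_mul, hB, lkq_bCount n d k]
      · simp [hP]
    calc (∑ a ∈ A, ∑ b ∈ B, if d ∣ a ^ ℓ - 1 ∧ ∀ i, d ∣ b i then Nat.totient d else 0)
        = ∑ a ∈ A, if d ∣ a ^ ℓ - 1 then (n / d) ^ k * Nat.totient d else 0 :=
          Finset.sum_congr rfl fun a _ => hb a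
      _ = (A.filter fun a => d ∣ a ^ ℓ - 1).card * ((n / d) ^ k * Nat.totient d) := by
          rw [← Finset.sum_filter, Finset.sum_const, smul_eq_mul]
      _ = ((Finset.range n).filter
            fun a => Nat.gcd a n = 1 ∧ a ^ ℓ % d = 1 % d).card
              * ((n / d) ^ k * Nat.totient d) := by rw [hAcount d hdn]
      _ = (n / d) ^ k * (Nat.totient d * ((Finset.range n).filter
            fun a => Nat.gcd a n = 1 ∧ a ^ ℓ % d = 1 % d).card) := by ring
      _ = (n / d) ^ k * (Nat.totient n * C d) := by rw [lkq_aCount n d ℓ hdn hn hℓ]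
      _ = n.totient * ((n / d) ^ k * C d) := by ring
  calc ∑ a ∈ A, ∑ b ∈ B, Nat.gcd (a ^ ℓ - 1) (Nat.gcd (Finset.univ.gcd b) n)
      = ∑ a ∈ A, ∑ b ∈ B, ∑ d ∈ n.divisors,
          (if d ∣ a ^ ℓ - 1 ∧ ∀ i, d ∣ b i then Nat.totient d else 0) := by
        refine Finset.sum_congr rfl fun a _ => Finset.sum_congr rfl fun b _ => ?_
        rw [← Nat.gcd_assoc, lkq_gcd_eq_sum_totient _ n hn.ne', Finset.sum_filter]
        refine Finset.sum_congr rfl fun d _ => ?_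
        refine if_congr ?_ rfl rfl
        rw [Nat.dvd_gcd_iff, Finset.dvd_gcd_iff]
        simp
    _ = ∑ d ∈ n.divisors, ∑ a ∈ A, ∑ b ∈ B,
          (if d ∣ a ^ ℓ - 1 ∧ ∀ i, d ∣ b i then Nat.totient d else 0) := by
        rw [Finset.sum_congr rfl fun a _ => Finset.sum_comm, Finset.sum_comm]
    _ = ∑ d ∈ n.divisors, n.totient * ((n / d) ^ k * C d) :=
        Finset.sum_congr rfl step_d
    _ = n.totient * ∑ d ∈ n.divisors, (n / d) ^ k * C d := by rw [Finset.mul_sum]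
    _ = n.totient * ∑ d ∈ n.divisors, d ^ k * C (n / d) := by
        rw [← Nat.sum_div_divisors n (fun d => (n / d) ^ k * C d)]
        congr 1
        refine Finset.sum_congr rfl fun d hd => ?_
        rw [Nat.div_div_self (Nat.mem_divisors.mp hd).1 hn.ne']
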